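/- Fix real parameters α, γ, δ, ε > 0, let β₁ be the unique solution of g = 1 on (1/ε, ∞) and β_c > β₁ the unique solution of F = 1 on (β₁, ∞). For each β ∈ (β₁, β_c), since λ(P₃₄(β),β) = F(β) > 1 and Z ↦ λ(Z,β) is continuous, strictly decreasing and tends to 0, there is a unique P(β) > P₃₄(β) with λ(P(β),β) = 1. Then P(β) tends to P₃₄(β_c) as β tends to β_c from the left. (Lemma 3 of the paper: lim_{β→β_c⁻} P(β) = P₃₄(β_c), i.e. the pressure meets P₃₄ continuously at the phase transition.) -/

import Mathlib

open Filter

/-- `P₃₄(β) = γβ + log(1 + e^{δβ})`. -/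
noncomputable def P34 (γ δ β : ℝ) : ℝ := γ * β + Real.log (1 + Real.exp (δ * β))

/-- `Σ₁(Z,β) = ∑_{n=1}^∞ e^{-n(αβ+Z)}` (indexed by `n : ℕ` via `n ↦ n+1`). -/
noncomputable def S1 (α β Z : ℝ) : ℝ := ∑' n : ℕ, Real.exp (-((n : ℝ) + 1) * (α * β + Z))

/-- `Σ₂(Z,β) = ∑_{n=1}^∞ (n+1)^{-β} e^{-nZ}`. -/
noncomputable def S2 (β Z : ℝ) : ℝ :=
  ∑' n : ℕ, ((n : ℝ) + 2) ^ (-β) * Real.exp (-((n : ℝ) + 1) * Z)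

/-- `Σ₃(Z,β) = (1+e^{δβ})^{-2} ∑_{n=1}^∞ (n+1)^{-εβ} e^{n(P₃₄(β)-Z)}`. -/
noncomputable def S3 (γ δ ε β Z : ℝ) : ℝ :=
  (∑' n : ℕ, ((n : ℝ) + 2) ^ (-(ε * β)) * Real.exp (((n : ℝ) + 1) * (P34 γ δ β - Z))) /
    (1 + Real.exp (δ * β)) ^ 2

/-- `g(β) = Σ₂(P₃₄(β),β)·Σ₃(P₃₄(β),β)`. -/
noncomputable def g (γ δ ε β : ℝ) : ℝ := S2 β (P34 γ δ β) * S3 γ δ ε β (P34 γ δ β)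

/-- `λ(Z,β) = Σ₁(Z,β) + Σ₂(Z,β)·e^{-αβ-Z}/(1 - Σ₂(Z,β)·Σ₃(Z,β))`. -/
noncomputable def lam (α γ δ ε β Z : ℝ) : ℝ :=
  S1 α β Z + S2 β Z * Real.exp (-(α * β) - Z) / (1 - S2 β Z * S3 γ δ ε β Z)

/-- `F(β) = λ(P₃₄(β),β)`. -/
noncomputable def F (α γ δ ε β : ℝ) : ℝ := lam α γ δ ε β (P34 γ δ β)

lemma sum_exp_summable {c : ℝ} (hc : c < 0) :
    Summable (fun n : ℕ => Real.exp (((n:ℝ)+1) * c)) := by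
  have h : ∀ n : ℕ, Real.exp c * Real.exp c ^ n = Real.exp (((n:ℝ)+1) * c) := by
    intro n
    rw [← Real.exp_nat_mul, ← Real.exp_add]
    congr 1; ring
  exact ((summable_geometric_of_lt_one (Real.exp_pos c).le
    (Real.exp_lt_one_iff.2 hc)).mul_left (Real.exp c)).congr h

lemma summable_of_le_exp {c : ℝ} {f : ℕ → ℝ} (hc : c < 0)
    (h0 : ∀ n, 0 ≤ f n) (h1 : ∀ n, f n ≤ Real.exp (((n:ℝ)+1) * c)) : Summable f :=
  Summable.of_nonneg_of_le h0 h1 (sum_exp_summable hc)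

lemma summable_zeta {s : ℝ} (hs : 1 < s) :
    Summable (fun n : ℕ => ((n:ℝ)+2) ^ (-s)) := by
  have h : Summable (fun n : ℕ => ((n:ℝ)) ^ (-s)) := Real.summable_nat_rpow.2 (by linarith)
  exact ((summable_nat_add_iff 2).2 h).congr (fun n => by push_cast; ring_nf)

lemma continuous_rpow_nat (n : ℕ) : Continuous fun y : ℝ => ((n:ℝ)+2) ^ y := by
  have h : (0:ℝ) < (n:ℝ)+2 := by positivity
  have he : (fun y : ℝ => ((n:ℝ)+2) ^ y) = fun y => Real.exp (Real.log ((n:ℝ)+2) * y) :=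
    funext fun y => Real.rpow_def_of_pos h y
  rw [he]
  exact Real.continuous_exp.comp (continuous_const.mul continuous_id)

lemma continuous_P34 (γ δ : ℝ) : Continuous (P34 γ δ) := by
  unfold P34
  have h : Continuous fun β : ℝ => 1 + Real.exp (δ * β) := by fun_prop
  exact (continuous_const.mul continuous_id).add (h.log fun β => by positivity)

lemma P34_strictMono {γ δ : ℝ} (hγ : 0 < γ) (hδ : 0 < δ) : StrictMono (P34 γ δ) := by
  intro a b hab
  unfold P34
  have h1 : γ * a < γ * b := by nlinarith
  have h2 : Real.log (1 + Real.exp (δ*a)) < Real.log (1 + Real.exp (δ*b)) := by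
    apply Real.log_lt_log (by positivity)
    have := Real.exp_lt_exp.2 (show δ*a < δ*b by nlinarith)
    linarith
  linarith

lemma log_two_lt_P34 {γ δ : ℝ} (hγ : 0 < γ) (hδ : 0 < δ) {β : ℝ} (hβ : 0 < β) :
    Real.log 2 < P34 γ δ β := by
  unfold P34
  have h1 : Real.log 2 < Real.log (1 + Real.exp (δ*β)) := by
    apply Real.log_lt_log two_pos
    have : 1 < Real.exp (δ*β) := Real.one_lt_exp_iff.2 (by positivity)
    linarith
  nlinarith

lemma P34_pos {γ δ : ℝ} (hγ : 0 < γ) (hδ : 0 < δ) {β : ℝ} (hβ : 0 < β) : 0 < P34 γ δ β :=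
  lt_trans (Real.log_pos one_lt_two) (log_two_lt_P34 hγ hδ hβ)

lemma S1_eq {α β Z : ℝ} (h : 0 < α * β + Z) :
    S1 α β Z = Real.exp (-(α*β+Z)) / (1 - Real.exp (-(α*β+Z))) := by
  have key : ∀ n : ℕ, Real.exp (-((n:ℝ)+1) * (α*β+Z))
      = Real.exp (-(α*β+Z)) * Real.exp (-(α*β+Z)) ^ n := by
    intro n
    rw [← Real.exp_nat_mul, ← Real.exp_add]
    congr 1; ring
  unfold S1
  rw [tsum_congr key, tsum_mul_left,
    tsum_geometric_of_lt_one (Real.exp_pos _).le (Real.exp_lt_one_iff.2 (by linarith)),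
    div_eq_mul_inv]

lemma S1_mono {α β Z1 Z2 : ℝ} (h : 0 < α*β+Z1) (h12 : Z1 ≤ Z2) : S1 α β Z2 ≤ S1 α β Z1 := by
  rw [S1_eq h, S1_eq (by linarith)]
  have e1 : Real.exp (-(α*β+Z2)) ≤ Real.exp (-(α*β+Z1)) := Real.exp_le_exp.2 (by linarith)
  have e2 : Real.exp (-(α*β+Z1)) < 1 := Real.exp_lt_one_iff.2 (by linarith)
  exact div_le_div₀ (Real.exp_pos _).le e1 (by linarith) (by linarith)

lemma S1_strict {α β Z1 Z2 : ℝ} (h : 0 < α*β+Z1) (h12 : Z1 < Z2) : S1 α β Z2 < S1 α β Z1 := by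
  rw [S1_eq h, S1_eq (by linarith)]
  have e1 : Real.exp (-(α*β+Z2)) < Real.exp (-(α*β+Z1)) := Real.exp_lt_exp.2 (by linarith)
  have e2 : Real.exp (-(α*β+Z1)) < 1 := Real.exp_lt_one_iff.2 (by linarith)
  exact div_lt_div₀ e1 (by linarith) (Real.exp_pos _).le (by linarith)

lemma S1_lt_one {α β Z : ℝ} (h : Real.log 2 < α*β+Z) : S1 α β Z < 1 := by
  have h0 : 0 < α*β+Z := lt_trans (Real.log_pos one_lt_two) h
  have hr : Real.exp (-(α*β+Z)) < 1/2 := by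
    have : Real.exp (-(α*β+Z)) < Real.exp (-Real.log 2) := Real.exp_lt_exp.2 (by linarith)
    have h2 : Real.exp (-Real.log 2) = 1/2 := by
      rw [Real.exp_neg, Real.exp_log two_pos]; norm_num
    linarith
  rw [S1_eq h0, div_lt_one (by linarith)]
  linarith

lemma summable_S2 {β Z : ℝ} (hβ : 0 ≤ β) (hZ : 0 < Z) :
    Summable (fun n : ℕ => ((n:ℝ)+2)^(-β) * Real.exp (-((n:ℝ)+1) * Z)) := by
  apply summable_of_le_exp (c := -Z) (by linarith)
  · intro n; positivity
  · intro n
    have hn : (0:ℝ) ≤ (n:ℝ) := n.cast_nonneg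
    have h1 : ((n:ℝ)+2)^(-β) ≤ 1 :=
      Real.rpow_le_one_of_one_le_of_nonpos (by linarith) (by linarith)
    calc ((n:ℝ)+2)^(-β) * Real.exp (-((n:ℝ)+1) * Z)
        ≤ 1 * Real.exp (-((n:ℝ)+1) * Z) := mul_le_mul_of_nonneg_right h1 (Real.exp_pos _).le
      _ = Real.exp (((n:ℝ)+1) * (-Z)) := by rw [one_mul]; congr 1; ring

lemma summable_S3 {γ δ ε β Z : ℝ} (hεβ : 0 ≤ ε*β) (hZ : P34 γ δ β < Z) :
    Summable (fun n : ℕ => ((n:ℝ)+2)^(-(ε*β)) * Real.exp (((n:ℝ)+1) * (P34 γ δ β - Z))) := by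
  apply summable_of_le_exp (c := P34 γ δ β - Z) (by linarith)
  · intro n; positivity
  · intro n
    have hn : (0:ℝ) ≤ (n:ℝ) := n.cast_nonneg
    have h1 : ((n:ℝ)+2)^(-(ε*β)) ≤ 1 :=
      Real.rpow_le_one_of_one_le_of_nonpos (by linarith) (by linarith)
    calc ((n:ℝ)+2)^(-(ε*β)) * Real.exp (((n:ℝ)+1) * (P34 γ δ β - Z))
        ≤ 1 * Real.exp (((n:ℝ)+1) * (P34 γ δ β - Z)) :=
          mul_le_mul_of_nonneg_right h1 (Real.exp_pos _).le
      _ = Real.exp (((n:ℝ)+1) * (P34 γ δ β - Z)) := one_mul _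

lemma summable_S3_self {γ δ ε β : ℝ} (hεβ : 1 < ε*β) :
    Summable (fun n : ℕ => ((n:ℝ)+2)^(-(ε*β))
      * Real.exp (((n:ℝ)+1) * (P34 γ δ β - P34 γ δ β))) := by
  simpa using summable_zeta hεβ

lemma S2_nonneg (β Z : ℝ) : 0 ≤ S2 β Z := tsum_nonneg fun n => by positivity
lemma S3_nonneg (γ δ ε β Z : ℝ) : 0 ≤ S3 γ δ ε β Z :=
  div_nonneg (tsum_nonneg fun n => by positivity) (by positivity)

lemma S2_mono {β Z1 Z2 : ℝ} (hβ : 0 ≤ β) (h1 : 0 < Z1) (h12 : Z1 ≤ Z2) :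
    S2 β Z2 ≤ S2 β Z1 := by
  apply Summable.tsum_le_tsum _ (summable_S2 hβ (lt_of_lt_of_le h1 h12)) (summable_S2 hβ h1)
  intro n
  have hn : (0:ℝ) ≤ (n:ℝ) := n.cast_nonneg
  apply mul_le_mul_of_nonneg_left _ (by positivity)
  exact Real.exp_le_exp.2 (by nlinarith)

lemma S3_mono {γ δ ε β Z1 Z2 : ℝ} (hεβ : 0 ≤ ε*β) (h1 : P34 γ δ β ≤ Z1) (h12 : Z1 ≤ Z2)
    (hsum1 : Summable (fun n : ℕ => ((n:ℝ)+2)^(-(ε*β))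
      * Real.exp (((n:ℝ)+1) * (P34 γ δ β - Z1)))) :
    S3 γ δ ε β Z2 ≤ S3 γ δ ε β Z1 := by
  rcases eq_or_lt_of_le h12 with rfl | h
  · exact le_refl _
  · unfold S3
    gcongr ?_ / _
    apply Summable.tsum_le_tsum _ (summable_S3 hεβ (lt_of_le_of_lt h1 h)) hsum1
    intro n
    have hn : (0:ℝ) ≤ (n:ℝ) := n.cast_nonneg
    apply mul_le_mul_of_nonneg_left _ (by positivity)
    exact Real.exp_le_exp.2 (by nlinarith)

lemma S2_pos {β Z : ℝ} (hβ : 0 ≤ β) (hZ : 0 < Z) : 0 < S2 β Z := by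
  apply Summable.tsum_pos (summable_S2 hβ hZ) (fun n => by positivity) 0
  positivity

lemma contOn_tsum_S1 {α Z : ℝ} (hα : 0 < α) {s : Set ℝ} {b : ℝ}
    (hb : ∀ x ∈ s, b ≤ x) (hbZ : 0 < α*b+Z) :
    ContinuousOn (fun x => S1 α x Z) s := by
  unfold S1
  apply continuousOn_tsum (u := fun n : ℕ => Real.exp (((n:ℝ)+1) * (-(α*b+Z))))
  · intro n
    exact (Real.continuous_exp.comp (by fun_prop)).continuousOn
  · exact sum_exp_summable (by linarith)
  · intro n x hx
    have hn : (0:ℝ) ≤ (n:ℝ) := n.cast_nonneg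
    have hbx := hb x hx
    rw [Real.norm_eq_abs, abs_of_nonneg (Real.exp_pos _).le]
    have key : 0 ≤ ((n:ℝ)+1) * (α*(x-b)) :=
      mul_nonneg (by linarith) (mul_nonneg hα.le (by linarith))
    exact Real.exp_le_exp.2 (by nlinarith)

lemma contOn_tsum_S2 {W : ℝ → ℝ} {s : Set ℝ} (hW : Continuous W) {b w0 : ℝ}
    (hb : ∀ x ∈ s, b ≤ x) (hb0 : 0 < b) (hw0 : 0 < w0) (hw : ∀ x ∈ s, w0 ≤ W x) :
    ContinuousOn (fun x => ∑' n : ℕ, ((n:ℝ)+2)^(-x) * Real.exp (-((n:ℝ)+1) * W x)) s := by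
  apply continuousOn_tsum (u := fun n : ℕ => Real.exp (((n:ℝ)+1) * (-w0)))
  · intro n
    exact (((continuous_rpow_nat n).comp continuous_neg).mul
      (Real.continuous_exp.comp (continuous_const.mul hW))).continuousOn
  · exact sum_exp_summable (by linarith)
  · intro n x hx
    have hn : (0:ℝ) ≤ (n:ℝ) := n.cast_nonneg
    have hbx := hb x hx
    have hwx := hw x hx
    rw [Real.norm_eq_abs, abs_of_nonneg (by positivity)]
    have h1 : ((n:ℝ)+2)^(-x) ≤ 1 :=
      Real.rpow_le_one_of_one_le_of_nonpos (by linarith) (by linarith)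
    calc ((n:ℝ)+2)^(-x) * Real.exp (-((n:ℝ)+1) * W x)
        ≤ 1 * Real.exp (-((n:ℝ)+1) * W x) := mul_le_mul_of_nonneg_right h1 (Real.exp_pos _).le
      _ ≤ Real.exp (((n:ℝ)+1) * (-w0)) := by
          rw [one_mul]; exact Real.exp_le_exp.2 (by nlinarith)

lemma contOn_tsum_zeta {ε : ℝ} (hε : 0 < ε) {s : Set ℝ} {b : ℝ}
    (hb : ∀ x ∈ s, b ≤ x) (hεb : 1 < ε * b) :
    ContinuousOn (fun x => ∑' n : ℕ, ((n:ℝ)+2)^(-(ε*x))) s := by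
  apply continuousOn_tsum (u := fun n : ℕ => ((n:ℝ)+2)^(-(ε*b)))
  · intro n
    exact ((continuous_rpow_nat n).comp (by fun_prop)).continuousOn
  · exact summable_zeta hεb
  · intro n x hx
    have hn : (0:ℝ) ≤ (n:ℝ) := n.cast_nonneg
    have hbx := hb x hx
    rw [Real.norm_eq_abs, abs_of_nonneg (by positivity)]
    exact Real.rpow_le_rpow_of_exponent_le (by linarith) (by nlinarith)

lemma contOn_tsum_S3Z {γ δ ε Z : ℝ} (hε : 0 < ε) {s : Set ℝ} {b c : ℝ}
    (hb : ∀ x ∈ s, b ≤ x) (hb0 : 0 < b) (hc : c < 0) (hVc : ∀ x ∈ s, P34 γ δ x - Z ≤ c) :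
    ContinuousOn
      (fun x => ∑' n : ℕ, ((n:ℝ)+2)^(-(ε*x)) * Real.exp (((n:ℝ)+1) * (P34 γ δ x - Z))) s := by
  apply continuousOn_tsum (u := fun n : ℕ => Real.exp (((n:ℝ)+1) * c))
  · intro n
    refine (((continuous_rpow_nat n).comp (by fun_prop)).mul
      (Real.continuous_exp.comp ?_)).continuousOn
    exact continuous_const.mul ((continuous_P34 γ δ).sub continuous_const)
  · exact sum_exp_summable hc
  · intro n x hx
    have hn : (0:ℝ) ≤ (n:ℝ) := n.cast_nonneg
    have hbx := hb x hx
    have hvx := hVc x hx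
    rw [Real.norm_eq_abs, abs_of_nonneg (by positivity)]
    have h1 : ((n:ℝ)+2)^(-(ε*x)) ≤ 1 :=
      Real.rpow_le_one_of_one_le_of_nonpos (by linarith) (by nlinarith)
    calc ((n:ℝ)+2)^(-(ε*x)) * Real.exp (((n:ℝ)+1) * (P34 γ δ x - Z))
        ≤ 1 * Real.exp (((n:ℝ)+1) * (P34 γ δ x - Z)) :=
          mul_le_mul_of_nonneg_right h1 (Real.exp_pos _).le
      _ ≤ Real.exp (((n:ℝ)+1) * c) := by
          rw [one_mul]; exact Real.exp_le_exp.2 (by nlinarith)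

lemma g_eq (γ δ ε β : ℝ) : g γ δ ε β =
    (∑' n : ℕ, ((n:ℝ)+2)^(-β) * Real.exp (-((n:ℝ)+1) * P34 γ δ β)) *
    ((∑' n : ℕ, ((n:ℝ)+2)^(-(ε*β))) / (1 + Real.exp (δ*β))^2) := by
  simp [g, S2, S3]

lemma continuousOn_g {γ δ ε : ℝ} (hγ : 0 < γ) (hδ : 0 < δ) (hε : 0 < ε) {b B : ℝ}
    (hb : 1 / ε < b) : ContinuousOn (g γ δ ε) (Set.Icc b B) := by
  have hb0 : 0 < b := lt_trans (by positivity) hb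
  have hεb : 1 < ε * b := by rw [div_lt_iff₀ hε] at hb; nlinarith
  have hmem : ∀ x ∈ Set.Icc b B, b ≤ x := fun x hx => hx.1
  have h2 : ContinuousOn
      (fun x => ∑' n : ℕ, ((n:ℝ)+2)^(-x) * Real.exp (-((n:ℝ)+1) * P34 γ δ x)) (Set.Icc b B) :=
    contOn_tsum_S2 (continuous_P34 γ δ) hmem hb0 (P34_pos hγ hδ hb0)
      (fun x hx => (P34_strictMono hγ hδ).monotone hx.1)
  have h3 : ContinuousOn
      (fun x => (∑' n : ℕ, ((n:ℝ)+2)^(-(ε*x))) / (1 + Real.exp (δ*x))^2) (Set.Icc b B) := by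
    apply ContinuousOn.div (contOn_tsum_zeta hε hmem hεb)
    · exact (show Continuous fun x : ℝ => (1 + Real.exp (δ*x))^2 by fun_prop).continuousOn
    · intro x _; positivity
  have hfe : g γ δ ε = fun β =>
      (∑' n : ℕ, ((n:ℝ)+2)^(-β) * Real.exp (-((n:ℝ)+1) * P34 γ δ β)) *
      ((∑' n : ℕ, ((n:ℝ)+2)^(-(ε*β))) / (1 + Real.exp (δ*β))^2) := funext (g_eq γ δ ε)
  rw [hfe]
  exact h2.mul h3

lemma lam_le {α γ δ ε β Z1 Z2 : ℝ} (hα : 0 < α) (hγ : 0 < γ) (hδ : 0 < δ)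
    (hβ : 0 < β) (hεβ : 1 < ε*β) (h1 : P34 γ δ β < Z1) (h12 : Z1 ≤ Z2)
    (hg : g γ δ ε β < 1) : lam α γ δ ε β Z2 ≤ lam α γ δ ε β Z1 := by
  have hP0 : 0 < P34 γ δ β := P34_pos hγ hδ hβ
  have hZ1 : 0 < Z1 := lt_trans hP0 h1
  have hεβ0 : 0 ≤ ε*β := by linarith
  have hS2a : S2 β Z1 ≤ S2 β (P34 γ δ β) := S2_mono hβ.le hP0 h1.le
  have hS3a : S3 γ δ ε β Z1 ≤ S3 γ δ ε β (P34 γ δ β) :=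
    S3_mono hεβ0 (le_refl _) h1.le (summable_S3_self hεβ)
  have hg' : S2 β Z1 * S3 γ δ ε β Z1 ≤ g γ δ ε β := by
    unfold g
    exact mul_le_mul hS2a hS3a (S3_nonneg _ _ _ _ _) (S2_nonneg _ _)
  have hS2b : S2 β Z2 ≤ S2 β Z1 := S2_mono hβ.le hZ1 h12
  have hS3b : S3 γ δ ε β Z2 ≤ S3 γ δ ε β Z1 := S3_mono hεβ0 h1.le h12 (summable_S3 hεβ0 h1)
  have hg2 : S2 β Z2 * S3 γ δ ε β Z2 ≤ S2 β Z1 * S3 γ δ ε β Z1 :=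
    mul_le_mul hS2b hS3b (S3_nonneg _ _ _ _ _) (S2_nonneg _ _)
  have hD1 : 0 < 1 - S2 β Z1 * S3 γ δ ε β Z1 := by linarith
  have hS1le : S1 α β Z2 ≤ S1 α β Z1 := S1_mono (by nlinarith) h12
  have hN2 : S2 β Z2 * Real.exp (-(α*β) - Z2) ≤ S2 β Z1 * Real.exp (-(α*β) - Z1) :=
    mul_le_mul hS2b (Real.exp_le_exp.2 (by linarith)) (Real.exp_pos _).le (S2_nonneg _ _)
  have hfrac : S2 β Z2 * Real.exp (-(α*β) - Z2) / (1 - S2 β Z2 * S3 γ δ ε β Z2)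
      ≤ S2 β Z1 * Real.exp (-(α*β) - Z1) / (1 - S2 β Z1 * S3 γ δ ε β Z1) :=
    div_le_div₀ (mul_nonneg (S2_nonneg β Z1) (Real.exp_pos _).le) hN2 hD1 (by linarith)
  unfold lam
  linarith


/-- Lemma 3: with `β₁` the unique solution of `g = 1` on `(1/ε,∞)`, `β_c > β₁` the unique
solution of `F = 1` on `(β₁,∞)`, and `P : (β₁,β_c) → ℝ` the pressure, defined by
`P(β) > P₃₄(β)` and `λ(P(β),β) = 1`, we have `P(β) → P₃₄(β_c)` as `β → β_c⁻`. -/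
theorem stmt_9 (α γ δ ε : ℝ) (hα : 0 < α) (hγ : 0 < γ) (hδ : 0 < δ) (hε : 0 < ε)
    (β₁ : ℝ) (hβ₁ : 1 / ε < β₁) (hgβ₁ : g γ δ ε β₁ = 1)
    (hβ₁uniq : ∀ b, 1 / ε < b → g γ δ ε b = 1 → b = β₁)
    (βc : ℝ) (hβc : β₁ < βc) (hFβc : F α γ δ ε βc = 1)
    (hβcuniq : ∀ b, β₁ < b → F α γ δ ε b = 1 → b = βc)
    (P : ℝ → ℝ)
    (hP : ∀ β ∈ Set.Ioo β₁ βc, P34 γ δ β < P β ∧ lam α γ δ ε β (P β) = 1) :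
    Tendsto P (nhdsWithin βc (Set.Ioo β₁ βc)) (nhds (P34 γ δ βc)) := by
  have hβ₁0 : 0 < β₁ := lt_trans (by positivity) hβ₁
  have hβc0 : 0 < βc := lt_trans hβ₁0 hβc
  have hεβc : 1 < ε * βc := by rw [div_lt_iff₀ hε] at hβ₁; nlinarith
  have hZclog : Real.log 2 < P34 γ δ βc := log_two_lt_P34 hγ hδ hβc0
  have hlog2 : (0:ℝ) < Real.log 2 := Real.log_pos one_lt_two
  have hZcpos : 0 < P34 γ δ βc := lt_trans hlog2 hZclog
  have hαβc : 0 < α * βc := mul_pos hα hβc0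
  -- facts at the critical point
  have hS1c : S1 α βc (P34 γ δ βc) < 1 := S1_lt_one (by linarith)
  have hS2cpos : 0 < S2 βc (P34 γ δ βc) := S2_pos hβc0.le hZcpos
  have hNcpos : 0 < S2 βc (P34 γ δ βc) * Real.exp (-(α*βc) - P34 γ δ βc) :=
    mul_pos hS2cpos (Real.exp_pos _)
  have hF1 : S1 α βc (P34 γ δ βc)
      + S2 βc (P34 γ δ βc) * Real.exp (-(α*βc) - P34 γ δ βc)
        / (1 - S2 βc (P34 γ δ βc) * S3 γ δ ε βc (P34 γ δ βc)) = 1 := hFβc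
  have hfracpos : 0 < S2 βc (P34 γ δ βc) * Real.exp (-(α*βc) - P34 γ δ βc)
      / (1 - S2 βc (P34 γ δ βc) * S3 γ δ ε βc (P34 γ δ βc)) := by linarith
  have hDc : 0 < 1 - S2 βc (P34 γ δ βc) * S3 γ δ ε βc (P34 γ δ βc) := by
    rcases lt_trichotomy (1 - S2 βc (P34 γ δ βc) * S3 γ δ ε βc (P34 γ δ βc)) 0 with h|h|h
    · exact absurd hfracpos (not_lt.2 (le_of_lt (div_neg_of_pos_of_neg hNcpos h)))
    · rw [h, div_zero] at hfracpos; exact absurd hfracpos (lt_irrefl 0)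
    · exact h
  have hgc : g γ δ ε βc < 1 := by unfold g; linarith
  -- g < 1 on (β₁, βc]
  have hglt : ∀ x ∈ Set.Ioc β₁ βc, g γ δ ε x < 1 := by
    intro x hx
    have hx1 : 1 / ε < x := lt_trans hβ₁ hx.1
    rcases lt_trichotomy (g γ δ ε x) 1 with h|h|h
    · exact h
    · exact absurd (hβ₁uniq x hx1 h) (ne_of_gt hx.1)
    · exfalso
      rcases eq_or_lt_of_le hx.2 with rfl|hxc
      · linarith
      have hcont := continuousOn_g hγ hδ hε (b := x) (B := βc) hx1
      have h1m : (1:ℝ) ∈ Set.Icc (g γ δ ε βc) (g γ δ ε x) := ⟨hgc.le, h.le⟩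
      obtain ⟨c, hc1, hc2⟩ := intermediate_value_Icc' hx.2 hcont h1m
      have hcε : 1 / ε < c := lt_of_lt_of_le hx1 hc1.1
      have := hβ₁uniq c hcε hc2
      have : x ≤ β₁ := this ▸ hc1.1
      exact absurd hx.1 (not_lt.2 this)
  refine tendsto_order.2 ⟨?_, ?_⟩
  · -- lower bound
    intro a ha
    have hten : Tendsto (P34 γ δ) (nhdsWithin βc (Set.Ioo β₁ βc)) (nhds (P34 γ δ βc)) :=
      ((continuous_P34 γ δ).tendsto βc).mono_left nhdsWithin_le_nhds
    filter_upwards [hten.eventually (eventually_gt_nhds ha), self_mem_nhdsWithin]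
      with x h1 h2
    exact lt_trans h1 (hP x h2).1
  · -- upper bound
    intro a ha
    set Z := (P34 γ δ βc + a)/2 with hZdef
    have hZ1 : P34 γ δ βc < Z := by rw [hZdef]; linarith
    have hZ2 : Z < a := by rw [hZdef]; linarith
    -- λ(Z, βc) < 1
    have hS1s : S1 α βc Z < S1 α βc (P34 γ δ βc) := S1_strict (by linarith) hZ1
    have hS2le : S2 βc Z ≤ S2 βc (P34 γ δ βc) := S2_mono hβc0.le hZcpos hZ1.le
    have hS3le : S3 γ δ ε βc Z ≤ S3 γ δ ε βc (P34 γ δ βc) :=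
      S3_mono (by linarith) (le_refl _) hZ1.le (summable_S3_self hεβc)
    have hprodle : S2 βc Z * S3 γ δ ε βc Z
        ≤ S2 βc (P34 γ δ βc) * S3 γ δ ε βc (P34 γ δ βc) :=
      mul_le_mul hS2le hS3le (S3_nonneg _ _ _ _ _) (S2_nonneg _ _)
    have hDZ : 0 < 1 - S2 βc Z * S3 γ δ ε βc Z := by linarith
    have hNle : S2 βc Z * Real.exp (-(α*βc) - Z)
        ≤ S2 βc (P34 γ δ βc) * Real.exp (-(α*βc) - P34 γ δ βc) :=
      mul_le_mul hS2le (Real.exp_le_exp.2 (by linarith)) (Real.exp_pos _).le (S2_nonneg _ _)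
    have hfracle : S2 βc Z * Real.exp (-(α*βc) - Z) / (1 - S2 βc Z * S3 γ δ ε βc Z)
        ≤ S2 βc (P34 γ δ βc) * Real.exp (-(α*βc) - P34 γ δ βc)
          / (1 - S2 βc (P34 γ δ βc) * S3 γ δ ε βc (P34 γ δ βc)) :=
      div_le_div₀ hNcpos.le hNle hDc (by linarith)
    have hlamc : lam α γ δ ε βc Z < 1 := by
      unfold lam
      linarith
    -- continuity of λ(·, Z) near βc
    set b := (β₁ + βc)/2 with hbdef
    have hb1 : β₁ < b := by rw [hbdef]; linarith
    have hbc : b < βc := by rw [hbdef]; linarith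
    have hb0 : 0 < b := lt_trans hβ₁0 hb1
    have hmem : ∀ x ∈ Set.Icc b βc, b ≤ x := fun x hx => hx.1
    have hcS1 : ContinuousOn (fun x => S1 α x Z) (Set.Icc b βc) :=
      contOn_tsum_S1 hα hmem (by nlinarith)
    have hcS2 : ContinuousOn (fun x => S2 x Z) (Set.Icc b βc) := by
      have := contOn_tsum_S2 (W := fun _ => Z) (s := Set.Icc b βc) continuous_const
        hmem hb0 (by linarith : (0:ℝ) < Z) (fun x _ => le_refl Z)
      exact this
    have hcS3 : ContinuousOn (fun x => S3 γ δ ε x Z) (Set.Icc b βc) := by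
      unfold S3
      apply ContinuousOn.div
      · exact contOn_tsum_S3Z hε hmem hb0 (show P34 γ δ βc - Z < 0 by linarith)
          (fun x hx => by
            have := (P34_strictMono hγ hδ).monotone hx.2
            linarith)
      · exact (show Continuous fun x : ℝ => (1 + Real.exp (δ*x))^2 by fun_prop).continuousOn
      · intro x _; positivity
    have hβcmem : βc ∈ Set.Icc b βc := ⟨hbc.le, le_refl βc⟩
    have hne : 1 - S2 βc Z * S3 γ δ ε βc Z ≠ 0 := ne_of_gt hDZ
    have hcw : ContinuousWithinAt (fun x => lam α γ δ ε x Z) (Set.Icc b βc) βc := by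
      have h1 := hcS1.continuousWithinAt hβcmem
      have h2 := hcS2.continuousWithinAt hβcmem
      have h3 := hcS3.continuousWithinAt hβcmem
      have hexp : ContinuousWithinAt (fun x => Real.exp (-(α*x) - Z)) (Set.Icc b βc) βc :=
        (show Continuous fun x : ℝ => Real.exp (-(α*x) - Z) by fun_prop).continuousWithinAt
      have hden : ContinuousWithinAt (fun x => 1 - S2 x Z * S3 γ δ ε x Z)
          (Set.Icc b βc) βc := continuousWithinAt_const.sub (h2.mul h3)
      exact h1.add ((h2.mul hexp).div hden hne)
    have hev1 : ∀ᶠ x in nhdsWithin βc (Set.Icc b βc), lam α γ δ ε x Z < 1 :=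
      hcw.eventually (eventually_lt_nhds hlamc)
    have hle : nhdsWithin βc (Set.Ioo β₁ βc) ≤ nhdsWithin βc (Set.Icc b βc) := by
      apply nhdsWithin_le_iff.2
      apply mem_nhdsWithin.2
      exact ⟨Set.Ioi b, isOpen_Ioi, hbc, fun x hx => ⟨le_of_lt hx.1, le_of_lt hx.2.2⟩⟩
    filter_upwards [hle hev1, self_mem_nhdsWithin] with x hlt hx
    -- conclude P x < a
    by_contra hcon
    push_neg at hcon
    have hεx : 1 < ε * x := by rw [div_lt_iff₀ hε] at hβ₁; nlinarith [hx.1]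
    have hx0 : 0 < x := lt_trans hβ₁0 hx.1
    have hP34x : P34 γ δ x < Z := lt_trans (P34_strictMono hγ hδ hx.2) hZ1
    have hgx : g γ δ ε x < 1 := hglt x ⟨hx.1, hx.2.le⟩
    have hml : lam α γ δ ε x (P x) ≤ lam α γ δ ε x Z :=
      lam_le hα hγ hδ hx0 hεx hP34x (by linarith) hgx
    have := (hP x hx).2
    linarith
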